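/- If R is a G-graded ring (G a group with identity e) that is graded nil clean, then the identity component R_e is a nil clean ring, and every nonzero homogeneous element of degree g ≠ e is nilpotent. -/

import Mathlib

section Helpers
variable {G : Type*} [Group G] [DecidableEq G] {R : Type*} [Ring R]

omit [Group G] in
lemma grading_sum2 (C : G → AddSubgroup R) (hC : DirectSum.IsInternal C)
    {g₁ g₂ : G} (h12 : g₂ ≠ g₁) {x y : R}
    (hx : x ∈ C g₁) (hy : y ∈ C g₂) (hsum : x + y = 0) : x = 0 := by
  have h0 : (DirectSum.of (fun g => C g) g₁ ⟨x, hx⟩ +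
      DirectSum.of (fun g => C g) g₂ ⟨y, hy⟩) = 0 := by
    apply hC.injective
    simp [map_add, hsum]
  have h1 := DFunLike.congr_fun h0 g₁
  rw [DirectSum.add_apply, DirectSum.of_eq_same, DirectSum.of_eq_of_ne _ _ _ h12.symm, DirectSum.zero_apply] at h1
  simpa [Subtype.ext_iff] using h1

omit [Group G] in
lemma grading_sum3 (C : G → AddSubgroup R) (hC : DirectSum.IsInternal C)
    {g₁ g₂ g₃ : G} (h12 : g₂ ≠ g₁) (h13 : g₃ ≠ g₁) {x y z : R}
    (hx : x ∈ C g₁) (hy : y ∈ C g₂) (hz : z ∈ C g₃) (hsum : x + y + z = 0) : x = 0 := by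
  have h0 : (DirectSum.of (fun g => C g) g₁ ⟨x, hx⟩ +
      DirectSum.of (fun g => C g) g₂ ⟨y, hy⟩ +
      DirectSum.of (fun g => C g) g₃ ⟨z, hz⟩) = 0 := by
    apply hC.injective
    simp [map_add, hsum]
  have h1 := DFunLike.congr_fun h0 g₁
  rw [DirectSum.add_apply, DirectSum.add_apply, DirectSum.of_eq_same,
    DirectSum.of_eq_of_ne _ _ _ h12.symm, DirectSum.of_eq_of_ne _ _ _ h13.symm, DirectSum.zero_apply] at h1
  simpa [Subtype.ext_iff] using h1

omit [Group G] in
lemma grading_mem_mem (C : G → AddSubgroup R) (hC : DirectSum.IsInternal C)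
    {g₁ g₂ : G} (h12 : g₂ ≠ g₁) {x : R} (hx : x ∈ C g₁) (hx2 : x ∈ C g₂) : x = 0 :=
  grading_sum2 C hC h12 hx (neg_mem hx2) (add_neg_cancel x)

end Helpers

/-- A `G`-grading of a ring `R`: a family of additive subgroups `C g` with
`C g * C h ⊆ C (g*h)`, `1 ∈ C e`, and `R = ⊕_g C g` (internal direct sum). -/
structure Grading (G : Type*) [Group G] [DecidableEq G] (R : Type*) [Ring R] where
  C : G → AddSubgroup R
  one_mem : (1 : R) ∈ C 1
  mul_mem : ∀ {g h : G} {a b : R}, a ∈ C g → b ∈ C h → a * b ∈ C (g * h)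
  isInternal : DirectSum.IsInternal C

namespace Grading

variable {G : Type*} [Group G] [DecidableEq G] {R : Type*} [Ring R]

/-- An element is homogeneous if it lies in some component. -/
def Homogeneous (A : Grading G R) (a : R) : Prop := ∃ g, a ∈ A.C g

/-- A homogeneous element is graded nil clean if it is the sum of a homogeneous
idempotent and a homogeneous nilpotent. -/
def IsGradedNilClean (A : Grading G R) (a : R) : Prop :=
  ∃ f b : R, A.Homogeneous f ∧ IsIdempotentElem f ∧ A.Homogeneous b ∧
    IsNilpotent b ∧ a = f + b

/-- A graded ring is graded nil clean if every homogeneous element is. -/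
def GradedNilClean (A : Grading G R) : Prop :=
  ∀ a : R, A.Homogeneous a → A.IsGradedNilClean a

/-- Graded strongly nil clean element: the idempotent and nilpotent commute. -/
def IsGradedStronglyNilClean (A : Grading G R) (a : R) : Prop :=
  ∃ f b : R, A.Homogeneous f ∧ IsIdempotentElem f ∧ A.Homogeneous b ∧
    IsNilpotent b ∧ f * b = b * f ∧ a = f + b

def GradedStronglyNilClean (A : Grading G R) : Prop :=
  ∀ a : R, A.Homogeneous a → A.IsGradedStronglyNilClean a

/-- A nonzero homogeneous idempotent lies in the identity component. -/
lemma idem_deg (A : Grading G R) {g : G} {f : R} (hf : f ∈ A.C g)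
    (hidem : IsIdempotentElem f) (hfne : f ≠ 0) : g = 1 := by
  by_contra hg
  have hff : f ∈ A.C (g * g) := by
    have := A.mul_mem hf hf
    rwa [hidem] at this
  have : g * g ≠ g := fun hc => hg (mul_right_cancel (by rw [hc, one_mul]))
  exact hfne (grading_mem_mem A.C A.isInternal this hf hff)

end Grading

/-- If a `G`-graded ring `R` is graded nil clean, then the identity component `R_e`
is a nil clean ring, and every nonzero homogeneous element of degree `g ≠ e` is
nilpotent. -/
theorem stmt0 {G : Type*} [Group G] [DecidableEq G] {R : Type*} [Ring R]
    (A : Grading G R) (h : A.GradedNilClean) :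
    (∀ a ∈ A.C 1, ∃ f b : R, f ∈ A.C 1 ∧ IsIdempotentElem f ∧ b ∈ A.C 1 ∧
      IsNilpotent b ∧ a = f + b) ∧
    (∀ g : G, g ≠ 1 → ∀ a ∈ A.C g, a ≠ 0 → IsNilpotent a) := by
  constructor
  · intro a ha
    obtain ⟨f, b, ⟨g₁, hf⟩, hidem, ⟨g₂, hb⟩, hnil, heq⟩ := h a ⟨1, ha⟩
    by_cases hf0 : f = 0
    · refine ⟨0, a, zero_mem _, by simp [IsIdempotentElem], ha, ?_, by simp⟩
      rw [heq, hf0, zero_add]; exact hnil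
    · have hg1 : g₁ = 1 := A.idem_deg hf hidem hf0
      subst hg1
      refine ⟨f, a - f, hf, hidem, sub_mem ha hf, ?_, by abel⟩
      have : a - f = b := by rw [heq]; abel
      rw [this]; exact hnil
  · intro g hg a ha ha0
    obtain ⟨f, b, ⟨g₁, hf⟩, hidem, ⟨g₂, hb⟩, hnil, heq⟩ := h a ⟨g, ha⟩
    by_cases hf0 : f = 0
    · rw [heq, hf0, zero_add]; exact hnil
    · have hg1 : g₁ = 1 := A.idem_deg hf hidem hf0
      subst hg1
      by_cases h2g : g₂ = g
      · -- f = a - b ∈ C g ∩ C 1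
        exfalso
        apply hf0
        have hfg : f ∈ A.C g := by
          have : f = a - b := by rw [heq]; abel
          rw [this]; exact sub_mem ha (h2g ▸ hb)
        exact grading_mem_mem A.C A.isInternal hg hf hfg
      · by_cases h21 : g₂ = 1
        · -- a ∈ C 1 ∩ C g
          exfalso
          apply ha0
          have ha1 : a ∈ A.C 1 := heq ▸ add_mem hf (h21 ▸ hb)
          exact grading_mem_mem A.C A.isInternal (Ne.symm hg) ha ha1
        · exfalso
          apply ha0
          have hs : a + (-f) + (-b) = 0 := by rw [heq]; abel
          exact grading_sum3 A.C A.isInternal (Ne.symm hg) h2g ha (neg_mem hf) (neg_mem hb) hs
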